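/- arXiv:2408.02606 — 3 statements merged into one kernel-verified Lean document; each statement's English description precedes it below -/
import Mathlib

section
/- In the exponential example, a set X ⊆ {1,…,n} is a weak PAXp (for δ = 1, class True, point v) if and only if |X ∩ {1,…,2m}| ≥ m. -/
open Finset

/-- The feature space of the exponential example with `n = 2m+1` features: the first
`2m` features have domain `{0,1}` and the last feature has domain `{0,1,n}`, encoded
as functions into `Fin 3` (with the value `2` of the last feature encoding `n`)
whose first `2m` coordinates are `< 2`. -/
abbrev ExpF (m : ℕ) :=
  {x : Fin (2 * m + 1) → Fin 3 // ∀ i : Fin (2 * m + 1), (i : ℕ) < 2 * m → (x i : ℕ) < 2}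

/-- The classifier of the exponential example: `x` is classified `true` iff at least `m`
of its first `2m` features have value `1` (i.e. the goal is reachable in one step). -/
def expκ (m : ℕ) (x : ExpF m) : Bool :=
  decide (m ≤ (Finset.univ.filter
    (fun i : Fin (2 * m + 1) => (i : ℕ) < 2 * m ∧ x.1 i = 1)).card)

/-- The specific point `v = (1,…,1,0)` of the exponential example. -/
def expv (m : ℕ) : ExpF m :=
  ⟨fun i => if (i : ℕ) < 2 * m then 1 else 0, by
    intro i h
    simp only [if_pos h]
    decide⟩

/-- `Prop(X)` in the exponential example: the proportion, among points agreeing with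
`v` on `X`, of points classified `true`. -/
noncomputable def expProp (m : ℕ) (X : Finset (Fin (2 * m + 1))) : ℝ :=
  ((Finset.univ.filter
      (fun x : ExpF m => (∀ i ∈ X, x.1 i = (expv m).1 i) ∧ expκ m x = true)).card : ℝ) /
  ((Finset.univ.filter (fun x : ExpF m => ∀ i ∈ X, x.1 i = (expv m).1 i)).card : ℝ)

/-- `X` is a weak PAXp (for threshold `δ = 1`, class `true`, point `v`) in the
exponential example. -/
def ExpIsWeakPAXp (m : ℕ) (X : Finset (Fin (2 * m + 1))) : Prop :=
  1 ≤ expProp m X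

/-- `X` is a PAXp (subset-minimal weak PAXp) in the exponential example. -/
def ExpIsPAXp (m : ℕ) (X : Finset (Fin (2 * m + 1))) : Prop :=
  ExpIsWeakPAXp m X ∧ ∀ Y ⊂ X, ¬ ExpIsWeakPAXp m Y

/-- in the exponential example, `X` is a weak PAXp (for `δ = 1`,
class `true`, point `v`) iff `X` contains at least `m` of the first `2m` features. -/
theorem expIsWeakPAXp_iff (m : ℕ) (hm : 1 ≤ m) (X : Finset (Fin (2 * m + 1))) :
    ExpIsWeakPAXp m X ↔
      m ≤ (X.filter (fun i : Fin (2 * m + 1) => (i : ℕ) < 2 * m)).card := by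
  classical
  set A := Finset.univ.filter (fun x : ExpF m => ∀ i ∈ X, x.1 i = (expv m).1 i) with hA
  set B := Finset.univ.filter
      (fun x : ExpF m => (∀ i ∈ X, x.1 i = (expv m).1 i) ∧ expκ m x = true) with hB
  have hBA : B ⊆ A := by
    intro x hx
    simp only [hA, hB, Finset.mem_filter] at hx ⊢
    exact ⟨hx.1, hx.2.1⟩
  have hvA : expv m ∈ A := by
    simp [hA]
  have hApos : (0 : ℝ) < (A.card : ℝ) := by
    exact_mod_cast Finset.card_pos.mpr ⟨_, hvA⟩
  have hiff : ExpIsWeakPAXp m X ↔ A = B := by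
    unfold ExpIsWeakPAXp expProp
    rw [← hA, ← hB, one_le_div hApos]
    constructor
    · intro h
      exact (Finset.eq_of_subset_of_card_le hBA (by exact_mod_cast h)).symm
    · intro h
      rw [h]
  rw [hiff]
  have hAll : A = B ↔ ∀ x : ExpF m, (∀ i ∈ X, x.1 i = (expv m).1 i) → expκ m x = true := by
    constructor
    · intro h x hx
      have : x ∈ B := by rw [← h]; simp only [hA, Finset.mem_filter]; exact ⟨Finset.mem_univ x, hx⟩
      simp only [hB, Finset.mem_filter] at this
      exact this.2.2
    · intro h
      apply Finset.Subset.antisymm _ hBA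
      intro x hx
      simp only [hA, Finset.mem_filter] at hx
      simp only [hB, Finset.mem_filter]
      exact ⟨Finset.mem_univ x, hx.2, h x hx.2⟩
  rw [hAll]
  constructor
  · intro h
    -- construct the worst-case point
    have hx0 : ∀ i : Fin (2 * m + 1),
        ((if (i : ℕ) < 2 * m ∧ i ∈ X then (1 : Fin 3) else 0) : Fin 3).val < 2 := by
      intro i; split <;> decide
    set x0 : ExpF m := ⟨fun i => if (i : ℕ) < 2 * m ∧ i ∈ X then 1 else 0,
      fun i _ => hx0 i⟩ with hx0def
    have hagree : ∀ i ∈ X, x0.1 i = (expv m).1 i := by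
      intro i hi
      simp only [hx0def, expv, hi, and_true]
    have := h x0 hagree
    rw [expκ, decide_eq_true_iff] at this
    have hset : Finset.univ.filter
        (fun i : Fin (2 * m + 1) => (i : ℕ) < 2 * m ∧ x0.1 i = 1) =
        X.filter (fun i : Fin (2 * m + 1) => (i : ℕ) < 2 * m) := by
      ext i
      simp only [Finset.mem_filter, Finset.mem_univ, true_and, hx0def]
      constructor
      · rintro ⟨h1, h2⟩
        by_cases hc : (i : ℕ) < 2 * m ∧ i ∈ X
        · exact ⟨hc.2, h1⟩
        · simp [hc] at h2
      · rintro ⟨h1, h2⟩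
        exact ⟨h2, by simp [h2, h1]⟩
    rwa [hset] at this
  · intro h x hx
    rw [expκ, decide_eq_true_iff]
    refine le_trans h (Finset.card_le_card ?_)
    intro i hi
    simp only [Finset.mem_filter] at hi
    simp only [Finset.mem_filter, Finset.mem_univ, true_and]
    refine ⟨hi.2, ?_⟩
    have := hx i hi.1
    rw [this]
    simp [expv, hi.2]
end

section
/- In the exponential example, the PAXp's (for δ = 1, class True, point v) are precisely the subsets of {1,…,2m} of cardinality exactly m; consequently the number of PAXp's equals the binomial coefficient C(2m, m). -/
open Finset

lemma expWeak_iff_forall (m : ℕ) (X : Finset (Fin (2 * m + 1))) :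
    ExpIsWeakPAXp m X ↔
      ∀ x : ExpF m, (∀ i ∈ X, x.1 i = (expv m).1 i) → expκ m x = true := by
  unfold ExpIsWeakPAXp expProp
  set B := Finset.univ.filter
      (fun x : ExpF m => (∀ i ∈ X, x.1 i = (expv m).1 i) ∧ expκ m x = true) with hB
  set A := Finset.univ.filter
      (fun x : ExpF m => ∀ i ∈ X, x.1 i = (expv m).1 i) with hA
  have hvA : expv m ∈ A := mem_filter.mpr ⟨mem_univ _, fun i _ => rfl⟩
  have hApos : (0 : ℝ) < A.card := by
    exact_mod_cast Finset.card_pos.mpr ⟨_, hvA⟩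
  have hsub : B ⊆ A := fun y hy => mem_filter.mpr ⟨mem_univ _, (mem_filter.mp hy).2.1⟩
  constructor
  · intro h x hx
    by_contra hfalse
    have hxA : x ∈ A := mem_filter.mpr ⟨mem_univ _, hx⟩
    have hxB : x ∉ B := by
      intro hc
      exact hfalse (mem_filter.mp hc).2.2
    have hcard : B.card < A.card := card_lt_card ⟨hsub, fun hc => hxB (hc hxA)⟩
    have h' : (A.card : ℝ) ≤ B.card := (one_le_div hApos).mp h
    exact absurd h' (by exact_mod_cast Nat.not_le.mpr hcard)
  · intro h
    have hBA : B = A := by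
      apply Finset.Subset.antisymm hsub
      intro y hy
      have hy' := (mem_filter.mp hy).2
      exact mem_filter.mpr ⟨mem_univ _, hy', h y hy'⟩
    rw [hBA]
    rw [div_self (ne_of_gt hApos)]

lemma expWeak_iff_card (m : ℕ) (X : Finset (Fin (2 * m + 1))) :
    ExpIsWeakPAXp m X ↔ m ≤ (X.filter (fun i : Fin (2 * m + 1) => (i : ℕ) < 2 * m)).card := by
  rw [expWeak_iff_forall]
  constructor
  · intro h
    -- counterexample point
    set x : ExpF m := ⟨fun i => if i ∈ X then (expv m).1 i else 0, by
      intro i hi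
      dsimp only
      split
      · exact (expv m).2 i hi
      · decide⟩ with hx
    have hagree : ∀ i ∈ X, x.1 i = (expv m).1 i := by
      intro i hi; simp [hx, hi]
    have hk := h x hagree
    have hset : (Finset.univ.filter
        (fun i : Fin (2 * m + 1) => (i : ℕ) < 2 * m ∧ x.1 i = 1)) =
        X.filter (fun i : Fin (2 * m + 1) => (i : ℕ) < 2 * m) := by
      ext i
      simp only [mem_filter, mem_univ, true_and, hx]
      constructor
      · rintro ⟨hlt, h1⟩
        refine ⟨?_, hlt⟩
        by_contra hiX
        simp [hiX] at h1
      · rintro ⟨hiX, hlt⟩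
        exact ⟨hlt, by simp [hiX, expv, hlt]⟩
    have := of_decide_eq_true hk
    rwa [hset] at this
  · intro hcard x hx
    have hsub : X.filter (fun i : Fin (2 * m + 1) => (i : ℕ) < 2 * m) ⊆
        Finset.univ.filter
          (fun i : Fin (2 * m + 1) => (i : ℕ) < 2 * m ∧ x.1 i = 1) := by
      intro i hi
      rw [mem_filter] at hi ⊢
      refine ⟨mem_univ _, hi.2, ?_⟩
      rw [hx i hi.1]
      simp [expv, hi.2]
    exact decide_eq_true (le_trans hcard (card_le_card hsub))

/-- in the exponential example, the PAXp's (for `δ = 1`, class `true`,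
point `v`) are exactly the subsets of the first `2m` features of cardinality `m`;
consequently there are exactly `C(2m, m)` PAXp's. -/
theorem expIsPAXp_iff_and_count (m : ℕ) (hm : 1 ≤ m) :
    (∀ X : Finset (Fin (2 * m + 1)),
        ExpIsPAXp m X ↔ ((∀ i ∈ X, (i : ℕ) < 2 * m) ∧ X.card = m)) ∧
    {X : Finset (Fin (2 * m + 1)) | ExpIsPAXp m X}.ncard = Nat.choose (2 * m) m := by
  have hiff : ∀ X : Finset (Fin (2 * m + 1)),
      ExpIsPAXp m X ↔ ((∀ i ∈ X, (i : ℕ) < 2 * m) ∧ X.card = m) := by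
    intro X
    constructor
    · rintro ⟨hw, hmin⟩
      rw [expWeak_iff_card] at hw
      have hXsub : X.filter (fun i : Fin (2 * m + 1) => (i : ℕ) < 2 * m) = X := by
        by_contra hne
        have hss : X.filter (fun i : Fin (2 * m + 1) => (i : ℕ) < 2 * m) ⊂ X :=
          lt_of_le_of_ne (filter_subset _ _) hne
        exact hmin _ hss ((expWeak_iff_card m _).mpr
          (by simpa [Finset.filter_filter] using hw))
      have hall : ∀ i ∈ X, (i : ℕ) < 2 * m := by
        intro i hi
        rw [← hXsub] at hi
        exact (mem_filter.mp hi).2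
      refine ⟨hall, ?_⟩
      rw [hXsub] at hw
      by_contra hne
      have hlt : m < X.card := lt_of_le_of_ne hw (Ne.symm hne)
      obtain ⟨Y, hYX, hYcard⟩ := Finset.exists_subset_card_eq (le_of_lt hlt)
      have hYss : Y ⊂ X := lt_of_le_of_ne hYX (by
        intro hc; rw [hc] at hYcard; omega)
      apply hmin Y hYss
      rw [expWeak_iff_card]
      have : Y.filter (fun i : Fin (2 * m + 1) => (i : ℕ) < 2 * m) = Y :=
        Finset.filter_true_of_mem (fun i hi => hall i (hYX hi))
      rw [this, hYcard]
    · rintro ⟨hall, hcard⟩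
      have hfX : X.filter (fun i : Fin (2 * m + 1) => (i : ℕ) < 2 * m) = X :=
        Finset.filter_true_of_mem hall
      constructor
      · rw [expWeak_iff_card, hfX, hcard]
      · intro Y hY
        rw [expWeak_iff_card]
        have : (Y.filter (fun i : Fin (2 * m + 1) => (i : ℕ) < 2 * m)).card ≤ Y.card :=
          card_le_card (filter_subset _ _)
        have hYlt : Y.card < X.card := card_lt_card hY
        omega
  refine ⟨hiff, ?_⟩
  have hSet : {X : Finset (Fin (2 * m + 1)) | ExpIsPAXp m X} =
      ↑(Finset.powersetCard m
        ((Finset.univ : Finset (Fin (2 * m + 1))).filter (fun i : Fin (2 * m + 1) => (i : ℕ) < 2 * m))) := by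
    ext X
    simp only [Set.mem_setOf_eq, Finset.coe_mem, Finset.mem_coe,
      Finset.mem_powersetCard, hiff X]
    constructor
    · rintro ⟨h1, h2⟩
      exact ⟨fun i hi => mem_filter.mpr ⟨mem_univ _, h1 i hi⟩, h2⟩
    · rintro ⟨h1, h2⟩
      exact ⟨fun i hi => (mem_filter.mp (h1 hi)).2, h2⟩
  rw [hSet, Set.ncard_coe_finset, Finset.card_powersetCard]
  congr 1
  have : ((Finset.univ : Finset (Fin (2 * m + 1))).filter (fun i : Fin (2 * m + 1) => (i : ℕ) < 2 * m)) =
      ({Fin.last (2 * m)}ᶜ : Finset (Fin (2 * m + 1))) := by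
    ext i
    simp only [mem_filter, mem_univ, true_and, Finset.mem_compl, Finset.mem_singleton]
    constructor
    · intro h hc; rw [hc] at h; simp [Fin.last] at h
    · intro h
      have := i.isLt
      rcases Nat.lt_or_ge (i : ℕ) (2 * m) with h' | h'
      · exact h'
      · exact absurd (Fin.ext (by omega : (i : ℕ) = 2 * m)) h
  rw [this, Finset.card_compl]
  simp
end

section
/- Define the classifier κ on the set of all selections by κ(x) = True iff x is injective, and let v be any injective selection. Then the proportion of selections classified True equals PM(G) / Π_{i∈V₁} |N(i)|, where PM(G) is the number of perfect matchings of G; consequently, for any threshold δ ∈ [0,1], the empty set ∅ of features is a weak PAXp for κ(v) = True iff PM(G) ≥ δ · Π_{i∈V₁} |N(i)|. -/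
open Finset

/-- A perfect matching of the bipartite graph with parts `V₁`, `V₂` whose edges
`{i,j}` are given by `j ∈ N i`: a set `M` of edges such that every vertex of
`V₁ ∪ V₂` is incident to exactly one edge of `M`. -/
def IsPerfectMatching {V₁ V₂ : Type*} (N : V₁ → Finset V₂) (M : Finset (V₁ × V₂)) : Prop :=
  (∀ e ∈ M, e.2 ∈ N e.1) ∧
  (∀ i : V₁, ∃! e, e ∈ M ∧ e.1 = i) ∧
  (∀ j : V₂, ∃! e, e ∈ M ∧ e.2 = j)

theorem card_inj_eq_card_pm
    {V₁ V₂ : Type*} [Fintype V₁] [Fintype V₂] [DecidableEq V₁] [DecidableEq V₂]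
    (hcard : Fintype.card V₁ = Fintype.card V₂)
    (N : V₁ → Finset V₂) :
    Nat.card {x : {y : V₁ → V₂ // ∀ i, y i ∈ N i} // Function.Injective x.1}
      = Nat.card {M : Finset (V₁ × V₂) // IsPerfectMatching N M} := by
  classical
  have hbij : ∀ x : {y : V₁ → V₂ // ∀ i, y i ∈ N i}, Function.Injective x.1 →
      Function.Bijective x.1 := fun x hx =>
    (Fintype.bijective_iff_injective_and_card x.1).2 ⟨hx, hcard⟩
  let f : {x : {y : V₁ → V₂ // ∀ i, y i ∈ N i} // Function.Injective x.1} →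
      {M : Finset (V₁ × V₂) // IsPerfectMatching N M} := fun x =>
    ⟨Finset.univ.image (fun i => (i, x.1.1 i)), by
      refine ⟨?_, ?_, ?_⟩
      · intro e he
        simp only [Finset.mem_image, Finset.mem_univ, true_and] at he
        obtain ⟨i, rfl⟩ := he
        exact x.1.2 i
      · intro i
        refine ⟨(i, x.1.1 i), ⟨Finset.mem_image.2 ⟨i, Finset.mem_univ i, rfl⟩, rfl⟩, ?_⟩
        rintro e ⟨he, hei⟩
        simp only [Finset.mem_image, Finset.mem_univ, true_and] at he
        obtain ⟨i', rfl⟩ := he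
        simp only at hei
        subst hei
        rfl
      · intro j
        obtain ⟨i, hi⟩ := (hbij x.1 x.2).2 j
        refine ⟨(i, x.1.1 i), ⟨Finset.mem_image.2 ⟨i, Finset.mem_univ i, rfl⟩, hi⟩, ?_⟩
        rintro e ⟨he, hej⟩
        simp only [Finset.mem_image, Finset.mem_univ, true_and] at he
        obtain ⟨i', rfl⟩ := he
        simp only at hej
        have : i' = i := x.2 (by rw [hej, hi])
        subst this
        rfl⟩
  have hf : Function.Bijective f := by
    constructor
    · intro x x' hxx'
      have hM : (Finset.univ.image (fun i => (i, x.1.1 i)) : Finset (V₁ × V₂))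
          = Finset.univ.image (fun i => (i, x'.1.1 i)) := congrArg Subtype.val hxx'
      ext1; ext1; ext i
      have : ((i, x.1.1 i) : V₁ × V₂) ∈ Finset.univ.image (fun i => (i, x'.1.1 i)) := by
        rw [← hM]; exact Finset.mem_image.2 ⟨i, Finset.mem_univ i, rfl⟩
      obtain ⟨i', -, hi'⟩ := Finset.mem_image.1 this
      have h1 : i' = i := congrArg Prod.fst hi'
      have h2 := congrArg Prod.snd hi'
      simp only at h2
      rw [h1] at h2
      exact h2.symm
    · rintro ⟨M, h1, h2, h3⟩
      set g : V₁ → V₁ × V₂ := fun i => Classical.choose (h2 i) with hg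
      have hgspec : ∀ i, (g i ∈ M ∧ (g i).1 = i) ∧
          ∀ e, (e ∈ M ∧ e.1 = i) → e = g i := fun i => Classical.choose_spec (h2 i)
      set x : V₁ → V₂ := fun i => (g i).2 with hx
      have hxg : ∀ i, g i = (i, x i) := fun i => by
        have := (hgspec i).1.2
        exact Prod.ext this rfl
      have hxmem : ∀ i, x i ∈ N i := fun i => by
        have := h1 (g i) (hgspec i).1.1
        rwa [(hgspec i).1.2] at this
      have hxinj : Function.Injective x := by
        intro a b hab
        obtain ⟨e, he, hu⟩ := h3 (x a)
        have ha : g a = e := by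
          have := hu (g a) ⟨(hgspec a).1.1, rfl⟩
          exact this
        have hb : g b = e := hu (g b) ⟨(hgspec b).1.1, hab.symm⟩
        have : (g a).1 = (g b).1 := by rw [ha, hb]
        rwa [(hgspec a).1.2, (hgspec b).1.2] at this
      refine ⟨⟨⟨x, hxmem⟩, hxinj⟩, ?_⟩
      apply Subtype.ext
      show Finset.univ.image (fun i => (i, x i)) = M
      ext e
      simp only [Finset.mem_image, Finset.mem_univ, true_and]
      constructor
      · rintro ⟨i, rfl⟩
        have := (hgspec i).1.1
        rwa [hxg i] at this
      · intro he
        refine ⟨e.1, ?_⟩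
        have h := (hgspec e.1).2 e ⟨he, rfl⟩
        rw [h, hxg e.1]
  exact Nat.card_congr (Equiv.ofBijective f hf)

/-- with the feature space consisting of all selections
(`x : V₁ → V₂` with `x i ∈ N i` for every `i`), the classifier `κ(x) = True iff x is
injective`, and `v` an injective selection, the proportion of selections classified
`True` (which is `Prop(∅)`) equals `PM(G) / Π_i |N(i)|`; consequently, for any
threshold `δ ∈ [0,1]`, the empty feature set is a weak PAXp for `κ(v) = True`
iff `PM(G) ≥ δ · Π_i |N(i)|`. -/
theorem empty_set_weakPAXp_iff_perfect_matchings
    {V₁ V₂ : Type*} [Fintype V₁] [Fintype V₂] [DecidableEq V₁] [DecidableEq V₂]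
    (hcard : Fintype.card V₁ = Fintype.card V₂)
    (N : V₁ → Finset V₂) (hN : ∀ i, (N i).Nonempty)
    (v : V₁ → V₂) (hvsel : ∀ i, v i ∈ N i) (hvinj : Function.Injective v)
    (δ : ℝ) (hδ0 : 0 ≤ δ) (hδ1 : δ ≤ 1) :
    ((Nat.card {x : {y : V₁ → V₂ // ∀ i, y i ∈ N i} // Function.Injective x.1} : ℝ) /
        (Nat.card {y : V₁ → V₂ // ∀ i, y i ∈ N i} : ℝ) =
      (Nat.card {M : Finset (V₁ × V₂) // IsPerfectMatching N M} : ℝ) /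
        ∏ i : V₁, ((N i).card : ℝ)) ∧
    (δ ≤ (Nat.card {x : {y : V₁ → V₂ // ∀ i, y i ∈ N i} // Function.Injective x.1} : ℝ) /
        (Nat.card {y : V₁ → V₂ // ∀ i, y i ∈ N i} : ℝ) ↔
      δ * ∏ i : V₁, ((N i).card : ℝ) ≤
        (Nat.card {M : Finset (V₁ × V₂) // IsPerfectMatching N M} : ℝ)) := by
  classical
  have hsel : Nat.card {y : V₁ → V₂ // ∀ i, y i ∈ N i} = ∏ i : V₁, (N i).card := by
    rw [Nat.card_congr (Equiv.subtypePiEquivPi), Nat.card_pi]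
    simp [Nat.card_eq_fintype_card]
  have hP : (Nat.card {y : V₁ → V₂ // ∀ i, y i ∈ N i} : ℝ) = ∏ i : V₁, ((N i).card : ℝ) := by
    rw [hsel]; push_cast; ring
  have hPpos : (0 : ℝ) < ∏ i : V₁, ((N i).card : ℝ) :=
    Finset.prod_pos fun i _ => by exact_mod_cast Finset.card_pos.2 (hN i)
  have key := card_inj_eq_card_pm hcard N
  constructor
  · rw [key, hP]
  · rw [key, hP, le_div_iff₀ hPpos]
end
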